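/- arXiv:1405.6514 — 4 statements merged into one kernel-verified Lean document; each statement's English description precedes it below -/
import Mathlib

section
/- Let u : [0,∞) → ℝ be bounded and measurable, M ∈ ℝ, and suppose there exist constants K, C > 0 such that |(1/t) ∫₀ᵗ u(s) ds − M| ≤ K e^{−Ct} for all t ≥ 1. Then there exists a constant K' > 0 such that |δ ∫₀^∞ u(t) e^{−δt} dt − M| ≤ K' δ for all δ ∈ (0,1]. -/
open MeasureTheory Set intervalIntegral
open Filter Topology


lemma aux_exp_deriv {b : ℝ} (x : ℝ) :
    HasDerivAt (fun s => Real.exp (-b*s)) (Real.exp (-b*x) * (-b)) x := by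
  have h1 : HasDerivAt (fun s : ℝ => -b*s) (-b) x := by
    simpa using (hasDerivAt_id x).const_mul (-b)
  exact (Real.hasDerivAt_exp _).comp x h1

lemma aux_exp_tendsto {b : ℝ} (hb : 0 < b) :
    Tendsto (fun s => Real.exp (-b*s)) atTop (𝓝 0) := by
  have := Real.tendsto_exp_neg_atTop_nhds_zero.comp
    (tendsto_id.const_mul_atTop hb)
  refine this.congr fun s => by simp [neg_mul]

lemma aux_exp_integral {b : ℝ} (hb : 0 < b) (t : ℝ) :
    ∫ s in Ioi t, Real.exp (-b*s) = Real.exp (-b*t)/b := by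
  have hd : ∀ x ∈ Ici t, HasDerivAt (fun s => -(Real.exp (-b*s))/b) (Real.exp (-b*x)) x := by
    intro x _
    have := ((aux_exp_deriv (b := b) x).neg).div_const b
    refine this.congr_deriv ?_
    rw [mul_neg, neg_neg, mul_div_assoc, div_self hb.ne', mul_one]
  have htend : Tendsto (fun s => -(Real.exp (-b*s))/b) atTop (𝓝 0) := by
    have := ((aux_exp_tendsto hb).neg).div_const b
    simpa using this
  have := integral_Ioi_of_hasDerivAt_of_nonneg' hd (fun x _ => (Real.exp_pos _).le) htend
  rw [this]; field_simp; ring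

lemma aux_texp_tendsto {b : ℝ} (hb : 0 < b) :
    Tendsto (fun s : ℝ => s * Real.exp (-b*s)) atTop (𝓝 0) := by
  have h := (Real.tendsto_pow_mul_exp_neg_atTop_nhds_zero 1).comp
    (tendsto_id.const_mul_atTop hb)
  have h2 := h.const_mul (1/b)
  rw [mul_zero] at h2
  refine h2.congr fun s => ?_
  have : b ≠ 0 := ne_of_gt hb
  field_simp [Function.comp]
  ring_nf
  simp only [Function.comp_apply, id]

lemma aux_texp_deriv {b : ℝ} (hb : 0 < b) (x : ℝ) :
    HasDerivAt (fun s => -((s/b + 1/b^2) * Real.exp (-b*s))) (x * Real.exp (-b*x)) x := by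
  have h1 : HasDerivAt (fun s : ℝ => s/b + 1/b^2) (1/b) x := by
    have := ((hasDerivAt_id x).div_const b).add_const (1/b^2)
    simpa [one_div] using this
  have := (h1.mul (aux_exp_deriv (b := b) x)).neg
  refine this.congr_deriv ?_
  field_simp
  ring

lemma aux_texp_tendsto2 {b : ℝ} (hb : 0 < b) :
    Tendsto (fun s : ℝ => -((s/b + 1/b^2) * Real.exp (-b*s))) atTop (𝓝 0) := by
  have := (((aux_texp_tendsto hb).const_mul (1/b)).add ((aux_exp_tendsto hb).const_mul (1/b^2))).neg
  simp only [mul_zero, add_zero, neg_zero, mul_zero, zero_add] at this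
  refine this.congr fun s => by ring

lemma aux_texp_integrable {b : ℝ} (hb : 0 < b) :
    IntegrableOn (fun s : ℝ => s * Real.exp (-b*s)) (Ioi 0) :=
  integrableOn_Ioi_deriv_of_nonneg' (fun x _ => aux_texp_deriv hb x)
    (fun x hx => mul_nonneg (le_of_lt hx) (Real.exp_pos _).le) (aux_texp_tendsto2 hb)

lemma aux_texp_integral {b : ℝ} (hb : 0 < b) :
    ∫ s in Ioi (0:ℝ), s * Real.exp (-b*s) = 1/b^2 := by
  have := integral_Ioi_of_hasDerivAt_of_nonneg' (fun x _ => aux_texp_deriv hb x)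
    (fun x hx => mul_nonneg (le_of_lt hx) (Real.exp_pos _).le) (aux_texp_tendsto2 hb)
  rw [this]; simp

lemma aux_fubini (v : ℝ → ℝ) (B : ℝ) (hv : Measurable v) (hB : ∀ t, |v t| ≤ B)
    {δ : ℝ} (hδ : 0 < δ) :
    ∫ t in Ioi (0:ℝ), v t * Real.exp (-δ*t) =
      δ * ∫ s in Ioi (0:ℝ), Real.exp (-δ*s) * (∫ x in (0:ℝ)..s, v x) := by
  have hB0 : 0 ≤ B := le_trans (abs_nonneg _) (hB 0)
  set μ := volume.restrict (Ioi (0:ℝ)) with hμ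
  set f : ℝ → ℝ → ℝ := fun t s => if t < s then v t * Real.exp (-δ*s) else 0 with hf
  have hmeas_f : Measurable (Function.uncurry f) := by
    apply Measurable.ite (measurableSet_lt measurable_fst measurable_snd)
    · exact (hv.comp measurable_fst).mul
        ((Real.measurable_exp.comp ((measurable_snd.const_mul (-δ)))))
    · exact measurable_const
  have hbound : ∀ t s : ℝ, ‖f t s‖ ≤ (Ioi t).indicator (fun s => |v t| * Real.exp (-δ*s)) s := by
    intro t s
    by_cases h : t < s
    · simp only [hf, if_pos h, indicator_of_mem (mem_Ioi.mpr h)]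
      rw [Real.norm_eq_abs, abs_mul, abs_of_pos (Real.exp_pos _)]
    · simp only [hf, if_neg h, norm_zero]
      exact Set.indicator_nonneg (fun s _ => by positivity) s
  have hexpint : Integrable (fun s => Real.exp (-δ*s)) μ := exp_neg_integrableOn_Ioi 0 hδ
  have hint : Integrable (Function.uncurry f) (μ.prod μ) := by
    rw [integrable_prod_iff hmeas_f.aestronglyMeasurable]
    constructor
    · refine ae_of_all _ fun t => ?_
      refine Integrable.mono' (hexpint.const_mul (|v t|))
        ((hmeas_f.comp measurable_prodMk_left).aestronglyMeasurable) ?_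
      refine ae_of_all _ fun s => ?_
      refine le_trans (hbound t s) ?_
      by_cases h : s ∈ Ioi t
      · simp [indicator_of_mem h]
      · simp only [indicator_of_notMem h]
        positivity
    · refine Integrable.mono' ((hexpint.div_const δ).const_mul B)
        (hmeas_f.aestronglyMeasurable.norm.integral_prod_right') ?_
      filter_upwards [ae_restrict_mem measurableSet_Ioi] with t ht
      simp only [Function.uncurry_apply_pair]
      have hnn : 0 ≤ ∫ s, ‖f t s‖ ∂μ := integral_nonneg fun s => norm_nonneg _
      rw [Real.norm_eq_abs, abs_of_nonneg hnn]
      have hIs : Integrable ((Ioi t).indicator (fun s => |v t| * Real.exp (-δ*s))) μ :=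
        (hexpint.const_mul (|v t|)).indicator measurableSet_Ioi
      calc ∫ s, ‖f t s‖ ∂μ
          ≤ ∫ s, (Ioi t).indicator (fun s => |v t| * Real.exp (-δ*s)) s ∂μ :=
            integral_mono_of_nonneg (ae_of_all _ fun s => norm_nonneg _) hIs
              (ae_of_all _ fun s => hbound t s)
        _ = ∫ s in Ioi t, |v t| * Real.exp (-δ*s) ∂μ := integral_indicator measurableSet_Ioi
        _ = ∫ s in Ioi t, |v t| * Real.exp (-δ*s) := by
            rw [hμ, Measure.restrict_restrict measurableSet_Ioi,
              inter_eq_left.mpr (Ioi_subset_Ioi (le_of_lt ht))]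
        _ = |v t| * (Real.exp (-δ*t)/δ) := by
            rw [MeasureTheory.integral_const_mul, aux_exp_integral hδ t]
        _ ≤ B * (Real.exp (-δ*t)/δ) := by
            apply mul_le_mul_of_nonneg_right (hB t)
            positivity
  have hswap := integral_integral_swap (f := f) hint
  have hLHS : ∫ t, (∫ s, f t s ∂μ) ∂μ = ∫ t in Ioi (0:ℝ), v t * Real.exp (-δ*t) / δ := by
    refine setIntegral_congr_fun measurableSet_Ioi fun t ht => ?_
    have h1 : (fun s => f t s) = (Ioi t).indicator (fun s => v t * Real.exp (-δ*s)) := by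
      funext s
      by_cases h : t < s
      · simp [hf, if_pos h, indicator_of_mem (mem_Ioi.mpr h)]
      · rw [indicator_of_notMem (fun hs => h (mem_Ioi.mp hs))]; simp [hf, if_neg h]
    rw [h1, MeasureTheory.integral_indicator measurableSet_Ioi, hμ,
      Measure.restrict_restrict measurableSet_Ioi,
      inter_eq_left.mpr (Ioi_subset_Ioi (le_of_lt ht)),
      MeasureTheory.integral_const_mul, aux_exp_integral hδ t, mul_div_assoc]
  have hRHS : ∫ s, (∫ t, f t s ∂μ) ∂μ
      = ∫ s in Ioi (0:ℝ), Real.exp (-δ*s) * (∫ x in (0:ℝ)..s, v x) := by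
    refine setIntegral_congr_fun measurableSet_Ioi fun s hs => ?_
    have h1 : (fun t => f t s) = (Iio s).indicator (fun t => v t * Real.exp (-δ*s)) := by
      funext t
      by_cases h : t < s
      · simp [hf, if_pos h, indicator_of_mem (mem_Iio.mpr h)]
      · rw [indicator_of_notMem (fun hs' => h (mem_Iio.mp hs'))]; simp [hf, if_neg h]
    rw [h1, MeasureTheory.integral_indicator measurableSet_Iio, hμ,
      Measure.restrict_restrict measurableSet_Iio]
    have h2 : Iio s ∩ Ioi 0 = Ioo 0 s := by rw [inter_comm, Ioi_inter_Iio]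
    rw [h2, MeasureTheory.integral_mul_const, intervalIntegral.integral_of_le (le_of_lt hs),
      ← integral_Ioc_eq_integral_Ioo, mul_comm]
  rw [hLHS, hRHS] at hswap
  rw [← hswap, MeasureTheory.integral_div]
  field_simp
  rfl

theorem stmt_4 (u : ℝ → ℝ) (M K C : ℝ) (hK : 0 < K) (hC : 0 < C)
    (hmeas : Measurable u) (hbd : ∃ B, ∀ t ≥ (0:ℝ), |u t| ≤ B)
    (hces : ∀ t ≥ (1:ℝ),
      |(1 / t) * (∫ s in (0:ℝ)..t, u s) - M| ≤ K * Real.exp (-C * t)) :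
    ∃ K' > 0, ∀ δ ∈ Ioc (0:ℝ) 1,
      |δ * (∫ t in Ioi (0:ℝ), u t * Real.exp (-δ * t)) - M| ≤ K' * δ := by
  obtain ⟨B, hB⟩ := hbd
  have hB0 : 0 ≤ B := le_trans (abs_nonneg _) (hB 0 le_rfl)
  set v : ℝ → ℝ := (Ici (0:ℝ)).indicator u with hv
  have hv_meas : Measurable v := hmeas.indicator measurableSet_Ici
  have hvB : ∀ t, |v t| ≤ B := by
    intro t
    by_cases h : t ∈ Ici (0:ℝ)
    · rw [hv, indicator_of_mem h]; exact hB t h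
    · rw [hv, indicator_of_notMem h]; simpa using hB0
  set U : ℝ → ℝ := fun s => ∫ x in (0:ℝ)..s, v x with hU
  have hvu : ∀ s, 0 ≤ s → U s = ∫ x in (0:ℝ)..s, u x := by
    intro s hs
    refine intervalIntegral.integral_congr fun x hx => ?_
    rw [uIcc_of_le hs] at hx
    exact indicator_of_mem (mem_Ici.mpr hx.1) u
  have hUb : ∀ s, 0 ≤ s → |U s| ≤ B * s := by
    intro s hs
    have h := intervalIntegral.norm_integral_le_of_norm_le_const
      (C := B) (f := v) (a := 0) (b := s) (fun x _ => hvB x)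
    rw [sub_zero, Real.norm_eq_abs] at h
    calc |U s| ≤ B * |s| := h
    _ = B * s := by rw [abs_of_nonneg hs]
  have hces' : ∀ s, 1 ≤ s → |U s - M * s| ≤ K * (s * Real.exp (-C*s)) := by
    intro s hs
    have hs0 : (0:ℝ) < s := lt_of_lt_of_le one_pos hs
    have h := hces s hs
    rw [← hvu s hs0.le] at h
    have heq : U s - M * s = s * ((1/s) * U s - M) := by field_simp
    rw [heq, abs_mul, abs_of_pos hs0]
    calc s * |1/s * U s - M| ≤ s * (K * Real.exp (-C*s)) :=
          mul_le_mul_of_nonneg_left h hs0.le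
      _ = K * (s * Real.exp (-C*s)) := by ring
  have hvi : ∀ a b : ℝ, IntervalIntegrable v volume a b := by
    intro a b
    rw [intervalIntegrable_iff]
    refine Integrable.mono' (g := fun _ => B) (integrableOn_const measure_Ioc_lt_top.ne)
      hv_meas.aestronglyMeasurable.restrict (ae_of_all _ fun x => hvB x)
  have hUcont : Continuous U := intervalIntegral.continuous_primitive hvi 0
  set K' : ℝ := B + |M| + K / C^2 with hK'def
  have hK' : 0 < K' :=
    add_pos_of_nonneg_of_pos (add_nonneg hB0 (abs_nonneg M)) (div_pos hK (by positivity))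
  refine ⟨K', hK', ?_⟩
  rintro δ ⟨hδ0, hδ1⟩
  have h1 : ∫ t in Ioi (0:ℝ), u t * Real.exp (-δ*t) = ∫ t in Ioi (0:ℝ), v t * Real.exp (-δ*t) :=
    setIntegral_congr_fun measurableSet_Ioi fun t ht => by
      rw [hv, indicator_of_mem (mem_Ici.mpr (le_of_lt ht))]
  have h2 := aux_fubini v B hv_meas hvB hδ0
  have hI1 : IntegrableOn (fun s => Real.exp (-δ*s) * U s) (Ioi 0) := by
    refine Integrable.mono' ((aux_texp_integrable hδ0).const_mul B)
      (((Real.continuous_exp.comp (continuous_const.mul continuous_id)).mul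
        hUcont).aestronglyMeasurable.restrict) ?_
    filter_upwards [ae_restrict_mem measurableSet_Ioi] with s hs
    rw [Real.norm_eq_abs, abs_mul, abs_of_pos (Real.exp_pos _)]
    calc Real.exp (-δ*s) * |U s| ≤ Real.exp (-δ*s) * (B * s) :=
          mul_le_mul_of_nonneg_left (hUb s (le_of_lt hs)) (Real.exp_pos _).le
      _ = B * (s * Real.exp (-δ*s)) := by ring
  have hI2 : IntegrableOn (fun s => Real.exp (-δ*s) * (M*s)) (Ioi 0) := by
    have heq : (fun s => Real.exp (-δ*s) * (M*s)) = fun s => M * (s * Real.exp (-δ*s)) := by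
      funext s; ring
    rw [heq]; exact (aux_texp_integrable hδ0).const_mul M
  have hval2 : ∫ s in Ioi (0:ℝ), Real.exp (-δ*s) * (M*s) = M / δ^2 := by
    have heq : (fun s => Real.exp (-δ*s) * (M*s)) = fun s => M * (s * Real.exp (-δ*s)) := by
      funext s; ring
    rw [heq, MeasureTheory.integral_const_mul, aux_texp_integral hδ0]; ring
  have hIsub : IntegrableOn (fun s => Real.exp (-δ*s) * (U s - M*s)) (Ioi 0) := by
    have heq : (fun s => Real.exp (-δ*s) * (U s - M*s))
        = fun s => Real.exp (-δ*s) * U s - Real.exp (-δ*s) * (M*s) := by funext s; ring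
    rw [heq]; exact hI1.sub hI2
  have key : δ * (∫ t in Ioi (0:ℝ), u t * Real.exp (-δ*t)) - M
      = δ^2 * ∫ s in Ioi (0:ℝ), Real.exp (-δ*s) * (U s - M*s) := by
    have hsub : ∫ s in Ioi (0:ℝ), Real.exp (-δ*s) * (U s - M*s)
        = (∫ s in Ioi (0:ℝ), Real.exp (-δ*s) * U s)
          - ∫ s in Ioi (0:ℝ), Real.exp (-δ*s) * (M*s) := by
      rw [← integral_sub hI1 hI2]
      exact integral_congr_ae (ae_of_all _ fun s => by ring)
    rw [h1, h2, hsub, hval2]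
    field_simp
    ring
  -- now bound the integral
  have hsplit : ∫ s in Ioi (0:ℝ), |Real.exp (-δ*s) * (U s - M*s)|
      = (∫ s in Ioc (0:ℝ) 1, |Real.exp (-δ*s) * (U s - M*s)|)
        + ∫ s in Ioi (1:ℝ), |Real.exp (-δ*s) * (U s - M*s)| := by
    rw [← Ioc_union_Ioi_eq_Ioi (zero_le_one : (0:ℝ) ≤ 1)]
    exact setIntegral_union (Ioc_disjoint_Ioi le_rfl) measurableSet_Ioi
      ((hIsub.mono_set Ioc_subset_Ioi_self).abs) ((hIsub.mono_set (Ioi_subset_Ioi zero_le_one)).abs)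
  have hexp_le_one : ∀ s : ℝ, 0 ≤ s → Real.exp (-δ*s) ≤ 1 := by
    intro s hs
    rw [Real.exp_le_one_iff]
    nlinarith
  have hb1 : ∫ s in Ioc (0:ℝ) 1, |Real.exp (-δ*s) * (U s - M*s)| ≤ B + |M| := by
    have hmono : ∀ s ∈ Ioc (0:ℝ) 1, |Real.exp (-δ*s) * (U s - M*s)| ≤ B + |M| := by
      intro s hs
      rw [abs_mul, abs_of_pos (Real.exp_pos _)]
      have h3 : |U s - M*s| ≤ B + |M| := by
        calc |U s - M*s| ≤ |U s| + |M*s| := abs_sub _ _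
          _ ≤ B * s + |M| * s := by
              refine add_le_add (hUb s hs.1.le) ?_
              rw [abs_mul, abs_of_pos hs.1]
          _ ≤ B * 1 + |M| * 1 := by
              refine add_le_add (mul_le_mul_of_nonneg_left hs.2 hB0)
                (mul_le_mul_of_nonneg_left hs.2 (abs_nonneg M))
          _ = B + |M| := by ring
      calc Real.exp (-δ*s) * |U s - M*s| ≤ 1 * (B + |M|) :=
            mul_le_mul (hexp_le_one s hs.1.le) h3 (abs_nonneg _) one_pos.le
        _ = B + |M| := one_mul _
    calc ∫ s in Ioc (0:ℝ) 1, |Real.exp (-δ*s) * (U s - M*s)|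
        ≤ ∫ _s in Ioc (0:ℝ) 1, (B + |M|) :=
          setIntegral_mono_on ((hIsub.mono_set Ioc_subset_Ioi_self).abs)
            (integrableOn_const measure_Ioc_lt_top.ne) measurableSet_Ioc hmono
      _ = B + |M| := by simp
  have hb2 : ∫ s in Ioi (1:ℝ), |Real.exp (-δ*s) * (U s - M*s)| ≤ K / C^2 := by
    have hmono : ∀ s ∈ Ioi (1:ℝ), |Real.exp (-δ*s) * (U s - M*s)| ≤ K * (s * Real.exp (-C*s)) := by
      intro s hs
      rw [abs_mul, abs_of_pos (Real.exp_pos _)]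
      have h0s : (0:ℝ) ≤ s := le_trans zero_le_one (le_of_lt hs)
      calc Real.exp (-δ*s) * |U s - M*s| ≤ 1 * (K * (s * Real.exp (-C*s))) :=
            mul_le_mul (hexp_le_one s h0s) (hces' s (le_of_lt hs)) (abs_nonneg _) one_pos.le
        _ = K * (s * Real.exp (-C*s)) := one_mul _
    calc ∫ s in Ioi (1:ℝ), |Real.exp (-δ*s) * (U s - M*s)|
        ≤ ∫ s in Ioi (1:ℝ), K * (s * Real.exp (-C*s)) :=
          setIntegral_mono_on ((hIsub.mono_set (Ioi_subset_Ioi zero_le_one)).abs)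
            ((show IntegrableOn (fun s : ℝ => K * (s * Real.exp (-C*s))) (Ioi 0) volume from
              (aux_texp_integrable hC).const_mul K).mono_set (Ioi_subset_Ioi zero_le_one))
            measurableSet_Ioi hmono
      _ ≤ ∫ s in Ioi (0:ℝ), K * (s * Real.exp (-C*s)) := by
          refine setIntegral_mono_set (show IntegrableOn (fun s : ℝ => K * (s * Real.exp (-C*s)))
              (Ioi 0) volume from (aux_texp_integrable hC).const_mul K)
            ?_ (HasSubset.Subset.eventuallyLE (Ioi_subset_Ioi zero_le_one))
          filter_upwards [ae_restrict_mem measurableSet_Ioi] with s hs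
          exact mul_nonneg hK.le (mul_nonneg (le_of_lt hs) (Real.exp_pos _).le)
      _ = K / C^2 := by
          rw [MeasureTheory.integral_const_mul, aux_texp_integral hC]; ring
  have hbound : |∫ s in Ioi (0:ℝ), Real.exp (-δ*s) * (U s - M*s)| ≤ K' := by
    calc |∫ s in Ioi (0:ℝ), Real.exp (-δ*s) * (U s - M*s)|
        ≤ ∫ s in Ioi (0:ℝ), |Real.exp (-δ*s) * (U s - M*s)| := by
          simpa only [Real.norm_eq_abs] using
            MeasureTheory.norm_integral_le_integral_norm (μ := volume.restrict (Ioi (0:ℝ)))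
              (f := fun s => Real.exp (-δ*s) * (U s - M*s))
      _ ≤ K' := by rw [hsplit, hK'def]; exact add_le_add hb1 hb2
  rw [key, abs_mul, abs_of_pos (by positivity : (0:ℝ) < δ^2)]
  calc δ^2 * |∫ s in Ioi (0:ℝ), Real.exp (-δ*s) * (U s - M*s)|
      ≤ δ^2 * K' := mul_le_mul_of_nonneg_left hbound (by positivity)
    _ ≤ δ * K' := by
        have h : δ^2 ≤ δ := by nlinarith
        exact mul_le_mul_of_nonneg_right h hK'.le
    _ = K' * δ := mul_comm _ _
end

section
/- Let ν be a Lévy measure on ℝ satisfying ∫_{|z|≤1} |z|² dν(z) < ∞ and ∫_{|z|>1} |z|^q dν(z) < ∞ for some q > 0. Define the measure μ on ℝ by μ(B) = ∫_ℝ ∫₀^∞ 1_B(e^{−s} y) ds dν(y) for Borel sets B. Then ∫_ℝ min(1, z²) dμ(z) < ∞, i.e. μ is a Lévy measure. -/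
open MeasureTheory Set
open scoped ENNReal

lemma aux_exp_lint (a : ℝ) :
    ∫⁻ s in Ioi a, ENNReal.ofReal (Real.exp (-(2 * s))) ∂volume
      = ENNReal.ofReal (Real.exp (-(2 * a)) / 2) := by
  have hint : IntegrableOn (fun s : ℝ => Real.exp (-(2 * s))) (Ioi a) := by
    simpa [neg_mul] using exp_neg_integrableOn_Ioi a (two_pos (α := ℝ))
  rw [← ofReal_integral_eq_lintegral_ofReal hint
    (Filter.Eventually.of_forall fun x => (Real.exp_pos _).le)]
  congr 1
  have := integral_comp_mul_left_Ioi (fun x => Real.exp (-x)) a (two_pos (α := ℝ))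
  simp only [smul_eq_mul] at this
  rw [this, integral_exp_neg_Ioi]
  ring

theorem stmt_7 (ν : Measure ℝ) (q : ℝ) (hq : 0 < q)
    (hsmall : ∫⁻ z in {z : ℝ | |z| ≤ 1}, ENNReal.ofReal (z ^ 2) ∂ν < ⊤)
    (hbig : ∫⁻ z in {z : ℝ | 1 < |z|}, ENNReal.ofReal (|z| ^ q) ∂ν < ⊤)
    (μ : Measure ℝ)
    (hμ : ∀ B : Set ℝ, MeasurableSet B →
      μ B = ∫⁻ y, ∫⁻ s in Ioi (0:ℝ), B.indicator (fun _ => (1:ℝ≥0∞))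
        (Real.exp (-s) * y) ∂volume ∂ν) :
    ∫⁻ z, ENNReal.ofReal (min 1 (z ^ 2)) ∂μ < ⊤ := by
  set σ : Measure ℝ := volume.restrict (Ioi (0:ℝ)) with hσ
  set κ : ℝ → Measure ℝ := fun y => σ.map (fun s => Real.exp (-s) * y) with hκdef
  have hTy : ∀ y : ℝ, Measurable fun s : ℝ => Real.exp (-s) * y := fun y =>
    (Real.measurable_exp.comp measurable_neg).mul_const y
  have hT : Measurable fun p : ℝ × ℝ => Real.exp (-p.2) * p.1 :=
    (Real.measurable_exp.comp measurable_snd.neg).mul measurable_fst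
  have hκapp : ∀ (B : Set ℝ), MeasurableSet B → ∀ y, κ y B =
      ∫⁻ s, B.indicator (fun _ => (1:ℝ≥0∞)) (Real.exp (-s) * y) ∂σ := by
    intro B hB y
    rw [hκdef, Measure.map_apply (hTy y) hB, ← lintegral_indicator_one (hB.preimage (hTy y))]
    congr 1 with s
  have hκ : Measurable κ := by
    apply Measure.measurable_of_measurable_coe
    intro B hB
    have : (fun y => κ y B) = fun y =>
        ∫⁻ s, (fun p : ℝ × ℝ => B.indicator (fun _ => (1:ℝ≥0∞)) (Real.exp (-p.2) * p.1)) (y, s) ∂σ := by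
      funext y; exact hκapp B hB y
    rw [this]
    exact Measurable.lintegral_prod_right' ((measurable_const.indicator hB).comp hT)
  have hμeq : μ = ν.bind κ := by
    ext B hB
    rw [hμ B hB, Measure.bind_apply hB hκ.aemeasurable]
    refine lintegral_congr fun y => ?_
    rw [hκapp B hB y]
  have hf : Measurable fun z : ℝ => ENNReal.ofReal (min 1 (z ^ 2)) :=
    ENNReal.measurable_ofReal.comp (measurable_const.min (measurable_id.pow_const 2))
  rw [hμeq, Measure.lintegral_bind hκ.aemeasurable hf.aemeasurable]
  have hinner : ∀ y, ∫⁻ z, ENNReal.ofReal (min 1 (z ^ 2)) ∂(κ y)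
      = ∫⁻ s in Ioi (0:ℝ), ENNReal.ofReal (min 1 ((Real.exp (-s) * y) ^ 2)) ∂volume := by
    intro y
    rw [hκdef, lintegral_map hf (hTy y)]
  simp_rw [hinner]
  set g : ℝ → ℝ≥0∞ := fun y =>
    ∫⁻ s in Ioi (0:ℝ), ENNReal.ofReal (min 1 ((Real.exp (-s) * y) ^ 2)) ∂volume with hg
  -- pointwise bound on the tail integral
  have htail : ∀ (y a : ℝ), ∫⁻ s in Ioi a, ENNReal.ofReal (min 1 ((Real.exp (-s) * y) ^ 2)) ∂volume
      ≤ ENNReal.ofReal (y ^ 2) * ENNReal.ofReal (Real.exp (-(2 * a)) / 2) := by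
    intro y a
    calc ∫⁻ s in Ioi a, ENNReal.ofReal (min 1 ((Real.exp (-s) * y) ^ 2)) ∂volume
        ≤ ∫⁻ s in Ioi a, ENNReal.ofReal (y ^ 2) * ENNReal.ofReal (Real.exp (-(2 * s))) ∂volume := by
          refine lintegral_mono fun s => ?_
          rw [← ENNReal.ofReal_mul (sq_nonneg y)]
          refine ENNReal.ofReal_le_ofReal ((min_le_right _ _).trans_eq ?_)
          rw [mul_pow, sq (Real.exp (-s)), ← Real.exp_add]
          ring_nf
      _ = ENNReal.ofReal (y ^ 2) * ENNReal.ofReal (Real.exp (-(2 * a)) / 2) := by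
          rw [lintegral_const_mul' _ _ ENNReal.ofReal_ne_top, aux_exp_lint a]
  -- bound for |y| ≤ 1
  have hA : ∀ y : ℝ, |y| ≤ 1 → g y ≤ ENNReal.ofReal (y ^ 2) := by
    intro y _
    refine (htail y 0).trans ?_
    refine mul_le_of_le_one_right zero_le ?_
    rw [ENNReal.ofReal_le_one]
    norm_num [Real.exp_zero]
  -- bound for 1 < |y|
  have hB : ∀ y : ℝ, 1 < |y| →
      g y ≤ ENNReal.ofReal q⁻¹ * ENNReal.ofReal (|y| ^ q) + ENNReal.ofReal (1/2) := by
    intro y hy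
    have hy0 : (0:ℝ) < |y| := lt_trans one_pos hy
    set t : ℝ := Real.log |y| with hT
    have ht : 0 < t := Real.log_pos hy
    have hsplit : Ioi (0:ℝ) = Ioc 0 t ∪ Ioi t := (Ioc_union_Ioi_eq_Ioi ht.le).symm
    have hexp : Real.exp (-(2 * t)) = (|y| ^ 2)⁻¹ := by
      rw [show -(2*t) = -t + -t by ring, Real.exp_add, Real.exp_neg, Real.exp_log hy0, sq, mul_inv]
    have hhalf : y ^ 2 * (Real.exp (-(2 * t)) / 2) = 1/2 := by
      have hyne : y ≠ 0 := by
        intro h; rw [h, abs_zero] at hy0; exact lt_irrefl 0 hy0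
      rw [hexp, ← sq_abs y]
      field_simp
    have hlog : t ≤ q⁻¹ * |y| ^ q := by
      have h1 : Real.log (|y| ^ q) ≤ |y| ^ q :=
        (Real.log_le_sub_one_of_pos (Real.rpow_pos_of_pos hy0 q)).trans (by linarith)
      rw [Real.log_rpow hy0] at h1
      rw [inv_mul_eq_div, le_div_iff₀ hq]
      nlinarith [h1]
    have hg_le : g y ≤ ENNReal.ofReal t + ENNReal.ofReal (1/2) := by
      rw [hg]
      simp only
      rw [hsplit, lintegral_union measurableSet_Ioi (Ioc_disjoint_Ioi le_rfl)]
      gcongr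
      · calc ∫⁻ s in Ioc 0 t, ENNReal.ofReal (min 1 ((Real.exp (-s) * y) ^ 2)) ∂volume
            ≤ ∫⁻ _ in Ioc 0 t, (1:ℝ≥0∞) ∂volume := by
              refine lintegral_mono fun s => ?_
              rw [ENNReal.ofReal_le_one]
              exact min_le_left _ _
          _ = ENNReal.ofReal t := by
              rw [setLIntegral_one, Real.volume_Ioc, sub_zero]
      · refine (htail y t).trans_eq ?_
        rw [← ENNReal.ofReal_mul (sq_nonneg y), hhalf]
    refine hg_le.trans ?_
    gcongr
    rw [← ENNReal.ofReal_mul (inv_nonneg.mpr hq.le)]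
    exact ENNReal.ofReal_le_ofReal hlog
  -- split the ν-integral
  have hS : MeasurableSet {z : ℝ | |z| ≤ 1} := by
    have : {z : ℝ | |z| ≤ 1} = (fun z : ℝ => |z|) ⁻¹' Iic 1 := rfl
    rw [this]; exact measurable_abs measurableSet_Iic
  have hScompl : {z : ℝ | |z| ≤ 1}ᶜ = {z : ℝ | 1 < |z|} := by
    ext z; simp [not_le]
  rw [← lintegral_add_compl g hS, hScompl]
  have hmeas_sq : Measurable fun y : ℝ => ENNReal.ofReal (y ^ 2) :=
    ENNReal.measurable_ofReal.comp (measurable_id.pow_const 2)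
  have hmeas_rpow : Measurable fun y : ℝ =>
      ENNReal.ofReal q⁻¹ * ENNReal.ofReal (|y| ^ q) + ENNReal.ofReal (1/2) := by
    refine Measurable.add (f := fun y : ℝ => ENNReal.ofReal q⁻¹ * ENNReal.ofReal (|y| ^ q)) ?_ measurable_const
    exact (ENNReal.measurable_ofReal.comp (((Real.continuous_rpow_const hq.le).measurable.comp measurable_abs))).const_mul _
  have h1 : ∫⁻ y in {z : ℝ | |z| ≤ 1}, g y ∂ν ≤ ∫⁻ z in {z : ℝ | |z| ≤ 1},
      ENNReal.ofReal (z ^ 2) ∂ν := setLIntegral_mono hmeas_sq fun y hy => hA y hy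
  have hνbig : ν {z : ℝ | 1 < |z|} ≤ ∫⁻ z in {z : ℝ | 1 < |z|}, ENNReal.ofReal (|z| ^ q) ∂ν := by
    rw [← setLIntegral_one]
    refine setLIntegral_mono (ENNReal.measurable_ofReal.comp ((Real.continuous_rpow_const hq.le).measurable.comp measurable_abs))
      fun z hz => ?_
    rw [show (1:ℝ≥0∞) = ENNReal.ofReal 1 by simp]
    exact ENNReal.ofReal_le_ofReal (Real.one_le_rpow (le_of_lt hz) hq.le)
  have h2 : ∫⁻ y in {z : ℝ | 1 < |z|}, g y ∂ν ≤
      ENNReal.ofReal q⁻¹ * (∫⁻ z in {z : ℝ | 1 < |z|}, ENNReal.ofReal (|z| ^ q) ∂ν)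
        + ENNReal.ofReal (1/2) * ν {z : ℝ | 1 < |z|} := by
    calc ∫⁻ y in {z : ℝ | 1 < |z|}, g y ∂ν
        ≤ ∫⁻ y in {z : ℝ | 1 < |z|},
            (ENNReal.ofReal q⁻¹ * ENNReal.ofReal (|y| ^ q) + ENNReal.ofReal (1/2)) ∂ν :=
          setLIntegral_mono hmeas_rpow fun y hy => hB y hy
      _ = ENNReal.ofReal q⁻¹ * (∫⁻ z in {z : ℝ | 1 < |z|}, ENNReal.ofReal (|z| ^ q) ∂ν)
            + ENNReal.ofReal (1/2) * ν {z : ℝ | 1 < |z|} := by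
          rw [lintegral_add_right _ measurable_const,
            lintegral_const_mul' _ _ ENNReal.ofReal_ne_top, setLIntegral_const]
  have hfin2 : ν {z : ℝ | 1 < |z|} < ⊤ := lt_of_le_of_lt hνbig hbig
  refine ENNReal.add_lt_top.mpr ⟨lt_of_le_of_lt h1 hsmall, lt_of_le_of_lt h2 ?_⟩
  exact ENNReal.add_lt_top.mpr ⟨ENNReal.mul_lt_top ENNReal.ofReal_lt_top hbig,
    ENNReal.mul_lt_top ENNReal.ofReal_lt_top hfin2⟩
end

section
/- Suppose ν is a Lévy measure on ℝ with ν((−∞,0]) = 0 and c := ∫₀¹ z dν(z) < ∞, and let L be the operator L[y, f] = −f'(y)(y + c) + ∫₀^∞ (f(y+z) − f(y)) dν(z) acting on bounded C² functions. Then there exists a bounded, nondecreasing, nonconstant f ∈ C²(ℝ) with f'(y) > 0 for y < −c and f constant on [−c, ∞), which satisfies −L[y, f] ≤ 0 for every y ∈ ℝ and attains its global maximum on [−c, ∞). Hence the strong maximum principle fails for −L: a nonconstant bounded classical subsolution attains a global maximum. -/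
open MeasureTheory Set

lemma glue_hasDerivAt (x : ℝ) :
    HasDerivAt expNegInvGlue (x⁻¹ ^ 2 * expNegInvGlue x) x := by
  simpa using expNegInvGlue.hasDerivAt_polynomial_eval_inv_mul 1 x

lemma glue_le_one (x : ℝ) : expNegInvGlue x ≤ 1 := by
  unfold expNegInvGlue
  split_ifs with h
  · norm_num
  · push_neg at h
    rw [Real.exp_le_one_iff]
    simp [h.le]

lemma glue_deriv_le_four (x : ℝ) : x⁻¹ ^ 2 * expNegInvGlue x ≤ 4 := by
  rcases le_or_gt x 0 with h | h
  · rw [expNegInvGlue.zero_of_nonpos h, mul_zero]; norm_num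
  · have hx : expNegInvGlue x = Real.exp (-x⁻¹) := by
      unfold expNegInvGlue; rw [if_neg (not_le.2 h)]
    set t := x⁻¹ with ht
    have htpos : 0 < t := inv_pos.2 h
    rw [hx]
    have h1 : (1 : ℝ) + t / 2 ≤ Real.exp (t / 2) := by linarith [Real.add_one_le_exp (t / 2)]
    have h2 : Real.exp (t / 2) * Real.exp (t / 2) = Real.exp t := by
      rw [← Real.exp_add]; ring_nf
    have h3 : Real.exp (-t) * Real.exp t = 1 := by
      rw [← Real.exp_add]; simp
    nlinarith [Real.exp_pos t, Real.exp_pos (-t), Real.exp_pos (t / 2)]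

theorem stmt_14 (ν : Measure ℝ) (hneg : ν (Iic 0) = 0)
    (hfin1 : ν (Ioi 1) < ⊤)
    (hc : IntegrableOn (fun z => z) (Ioc (0:ℝ) 1) ν)
    (c : ℝ) (hcdef : c = ∫ z in Ioc (0:ℝ) 1, z ∂ν) :
    ∃ f : ℝ → ℝ, ContDiff ℝ 2 f ∧ (∃ B, ∀ y, |f y| ≤ B) ∧ Monotone f ∧
      (¬ ∃ k, ∀ y, f y = k) ∧
      (∀ y < -c, 0 < deriv f y) ∧
      (∀ y ≥ -c, f y = f (-c)) ∧
      (∀ y, f y ≤ f (-c)) ∧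
      (∀ y, IntegrableOn (fun z => f (y + z) - f y) (Ioi 0) ν) ∧
      (∀ y, deriv f y * (y + c) - (∫ z in Ioi (0:ℝ), (f (y + z) - f y) ∂ν) ≤ 0) := by
  set g := expNegInvGlue with hg
  set f : ℝ → ℝ := fun y => -(g (-(y + c))) with hf
  -- derivative identity
  have hfd : ∀ y, HasDerivAt f ((-(y + c))⁻¹ ^ 2 * g (-(y + c))) y := by
    intro y
    have h1 : HasDerivAt (fun y : ℝ => -(y + c)) (-1) y :=
      ((hasDerivAt_id y).add_const c).neg
    have h2 : HasDerivAt (fun y : ℝ => g (-(y + c)))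
        ((-(y + c))⁻¹ ^ 2 * g (-(y + c)) * (-1)) y :=
      by have := (glue_hasDerivAt (-(y + c))).comp y h1; exact this
    have h3 := h2.neg
    refine h3.congr_deriv ?_
    ring
  have hderiv : ∀ y, deriv f y = (-(y + c))⁻¹ ^ 2 * g (-(y + c)) := fun y => (hfd y).deriv
  have hdiff : Differentiable ℝ f := fun y => (hfd y).differentiableAt
  have hdnonneg : ∀ y, 0 ≤ deriv f y := by
    intro y
    rw [hderiv y]
    exact mul_nonneg (sq_nonneg _) (expNegInvGlue.nonneg _)
  have hdle : ∀ y, deriv f y ≤ 4 := by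
    intro y; rw [hderiv y]; exact glue_deriv_le_four _
  have hmono : Monotone f := monotone_of_deriv_nonneg hdiff hdnonneg
  have habs : ∀ y, |f y| ≤ 1 := by
    intro y
    rw [abs_neg, abs_of_nonneg (expNegInvGlue.nonneg _)]
    exact glue_le_one _
  have hconstright : ∀ y ≥ -c, f y = 0 := by
    intro y hy
    have h0 : -(y + c) ≤ 0 := by linarith
    show -(g (-(y + c))) = 0
    rw [hg, expNegInvGlue.zero_of_nonpos h0, neg_zero]
  have hfc : f (-c) = 0 := hconstright _ le_rfl
  have hlip : LipschitzWith 4 f := by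
    apply lipschitzWith_of_nnnorm_deriv_le hdiff
    intro x
    rw [← NNReal.coe_le_coe, coe_nnnorm, Real.norm_eq_abs,
      abs_of_nonneg (hdnonneg x)]
    exact_mod_cast hdle x
  have hcont : Continuous f := hdiff.continuous
  have hlipbound : ∀ y z, 0 ≤ z → f (y + z) - f y ≤ 4 * z := by
    intro y z hz
    have := hlip.dist_le_mul (y + z) y
    rw [Real.dist_eq, Real.dist_eq] at this
    have h2 : |y + z - y| = z := by rw [show y + z - y = z by ring, abs_of_nonneg hz]
    rw [h2] at this
    calc f (y + z) - f y ≤ |f (y + z) - f y| := le_abs_self _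
      _ ≤ 4 * z := by exact_mod_cast this
  -- integrability
  have hint : ∀ y, IntegrableOn (fun z => f (y + z) - f y) (Ioi 0) ν := by
    intro y
    have hmeas : ∀ s : Set ℝ, AEStronglyMeasurable (fun z => f (y + z) - f y) (ν.restrict s) := by
      intro s
      exact ((hcont.comp (continuous_const.add continuous_id)).sub
        continuous_const).aestronglyMeasurable
    have h1 : IntegrableOn (fun z => f (y + z) - f y) (Ioc (0:ℝ) 1) ν := by
      refine Integrable.mono' (hc.const_mul 4) (hmeas _) ?_
      rw [ae_restrict_iff' measurableSet_Ioc]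
      filter_upwards with z hz
      rw [Real.norm_eq_abs, abs_of_nonneg (sub_nonneg.2 (hmono (by linarith [hz.1] : y ≤ y + z)))]
      exact hlipbound y z hz.1.le
    have h2 : IntegrableOn (fun z => f (y + z) - f y) (Ioi (1:ℝ)) ν := by
      refine Integrable.mono' (g := fun _ : ℝ => (2:ℝ)) ?_ (hmeas _) ?_
      · exact (integrableOn_const_iff (C := (2:ℝ))).2 (Or.inr hfin1)
      · filter_upwards with z
        rw [Real.norm_eq_abs]
        calc |f (y + z) - f y| ≤ |f (y + z)| + |f y| := abs_sub _ _
          _ ≤ 1 + 1 := add_le_add (habs _) (habs _)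
          _ = 2 := by norm_num
    have := h1.union h2
    rwa [Ioc_union_Ioi_eq_Ioi zero_le_one] at this
  refine ⟨f, ?_, ⟨1, habs⟩, hmono, ?_, ?_, ?_, ?_, hint, ?_⟩
  · -- ContDiff
    exact (expNegInvGlue.contDiff.comp ((contDiff_id.add contDiff_const).neg)).neg
  · -- nonconstant
    rintro ⟨k, hk⟩
    have h1 := hk (-c)
    have h2 := hk (-c - 1)
    rw [hfc] at h1
    have : f (-c - 1) = -(g 1) := by
      simp only [hf]
      norm_num
    have hpos : 0 < g 1 := expNegInvGlue.pos_of_pos one_pos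
    rw [this] at h2
    linarith [h1 ▸ h2]
  · -- positive derivative left of -c
    intro y hy
    rw [hderiv y]
    have h1 : 0 < -(y + c) := by linarith
    exact mul_pos (pow_pos (inv_pos.2 h1) 2) (expNegInvGlue.pos_of_pos h1)
  · -- constant on [-c, ∞)
    intro y hy
    rw [hconstright y hy, hfc]
  · -- global max
    intro y
    rw [hfc]
    simp only [hf, neg_nonpos]
    exact expNegInvGlue.nonneg _
  · -- main inequality
    intro y
    have hI : 0 ≤ ∫ z in Ioi (0:ℝ), (f (y + z) - f y) ∂ν := by
      apply setIntegral_nonneg measurableSet_Ioi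
      intro z hz
      exact sub_nonneg.2 (hmono (by linarith [mem_Ioi.1 hz] : y ≤ y + z))
    have hprod : deriv f y * (y + c) ≤ 0 := by
      rcases le_or_gt (-c) y with h | h
      · have : deriv f y = 0 := by
          rw [hderiv y, hg, expNegInvGlue.zero_of_nonpos (by linarith : -(y + c) ≤ 0), mul_zero]
        rw [this, zero_mul]
      · exact mul_nonpos_of_nonneg_of_nonpos (hdnonneg y) (by linarith)
    linarith
end

section
/- Let φ : ℝ → ℝ be continuous with φ(y) → +∞ as |y| → +∞ (coercive), and let V : ℝ → ℝ be upper semicontinuous and bounded above. For η > 0 set V_η(y) = V(y) − η φ(y). Then for every R > 0 there exists ȳ with |ȳ| ≥ R such that V_η(ȳ) ≥ V_η(y) for all |y| ≥ R. Moreover, if for every η > 0 every such maximizer ȳ satisfies |ȳ| = R, then sup_{y∈ℝ} V(y) = max_{|y| ≤ R} V(y), i.e. V attains its global supremum on the closed ball {|y| ≤ R}. -/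
open Set Filter

lemma usc_max {f : ℝ → ℝ} (hf : UpperSemicontinuous f) {s : Set ℝ}
    (hs : IsCompact s) (hne : s.Nonempty) (hbdd : BddAbove (f '' s)) :
    ∃ x ∈ s, ∀ y ∈ s, f y ≤ f x := by
  by_contra h
  push_neg at h
  set M := sSup (f '' s) with hMdef
  have hM : ∀ y ∈ s, f y ≤ M := fun y hy => le_csSup hbdd (mem_image_of_mem f hy)
  have hlt : ∀ x ∈ s, f x < M := by
    intro x hx
    obtain ⟨y, hy, hxy⟩ := h x hx
    exact lt_of_lt_of_le hxy (hM y hy)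
  -- cover s by open sets {f < (f x + M)/2}
  have hcov : s ⊆ ⋃ i : s, f ⁻¹' Iio ((f i + M) / 2) := by
    intro x hx
    exact mem_iUnion.2 ⟨⟨x, hx⟩, by simp [mem_preimage]; linarith [hlt x hx]⟩
  obtain ⟨t, ht⟩ := hs.elim_finite_subcover (fun i : s => f ⁻¹' Iio ((f i + M) / 2))
    (fun i => hf.isOpen_preimage _) hcov
  obtain ⟨x₀, hx₀⟩ := hne
  have htne : t.Nonempty := by
    obtain ⟨i, hi⟩ := mem_iUnion₂.1 (ht hx₀)
    exact ⟨i, hi.1⟩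
  set c := t.sup' htne (fun i => (f i + M) / 2) with hc
  have hcM : c < M := by
    rw [hc, Finset.sup'_lt_iff]
    intro i _
    linarith [hlt i i.2]
  have hle : M ≤ c := by
    apply csSup_le ⟨f x₀, mem_image_of_mem f hx₀⟩
    rintro _ ⟨y, hy, rfl⟩
    obtain ⟨i, hi, hyi⟩ := mem_iUnion₂.1 (ht hy)
    refine le_trans (le_of_lt hyi) ?_
    rw [hc]
    exact (Finset.le_sup'_iff htne).2 ⟨i, hi, le_refl _⟩
  linarith

lemma part1 (φ : ℝ → ℝ) (hφc : Continuous φ)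
    (hφcoer : Tendsto φ (cocompact ℝ) atTop)
    (V : ℝ → ℝ) (hV : UpperSemicontinuous V) {B : ℝ} (hVb : ∀ y, V y ≤ B) :
    ∀ η > (0:ℝ), ∀ R > (0:ℝ), ∃ ybar, R ≤ |ybar| ∧
      ∀ y, R ≤ |y| → V y - η * φ y ≤ V ybar - η * φ ybar := by
  intro η hη R hR
  set f : ℝ → ℝ := fun y => V y - η * φ y with hf
  have hfusc : UpperSemicontinuous f := by
    have : UpperSemicontinuous (fun y => -(η * φ y)) :=
      (Continuous.neg (continuous_const.mul hφc)).upperSemicontinuous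
    have := hV.add this
    exact (show f = fun z => V z + -(η * φ z) from funext fun z => sub_eq_add_neg _ _) ▸ this
  set S : Set ℝ := {y | R ≤ |y|} with hS
  have hSclosed : IsClosed S := isClosed_le continuous_const continuous_abs
  have hRS : R ∈ S := by simp [hS, abs_of_pos hR]
  set c := f R with hcdef
  -- the majorant tends to -∞
  have htends : Tendsto (fun y => B - η * φ y) (cocompact ℝ) atBot := by
    have h1 : Tendsto (fun y => η * φ y) (cocompact ℝ) atTop :=
      hφcoer.const_mul_atTop hη
    have h2 : Tendsto (fun y => -(η * φ y)) (cocompact ℝ) atBot :=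
      tendsto_neg_atTop_atBot.comp h1
    simpa [sub_eq_add_neg] using tendsto_atBot_add_const_left (cocompact ℝ) B h2
  have hev : ∀ᶠ y in cocompact ℝ, B - η * φ y < c :=
    htends.eventually (eventually_lt_atBot c)
  obtain ⟨K, hKc, hKs⟩ := mem_cocompact.1 hev
  set T : Set ℝ := S ∩ f ⁻¹' Ici c with hT
  have hTclosed : IsClosed T := hSclosed.inter (hfusc.isClosed_preimage c)
  have hTsub : T ⊆ K := by
    intro y hy
    by_contra hyK
    have h1 : B - η * φ y < c := hKs hyK
    have h2 : c ≤ f y := hy.2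
    have h3 : f y ≤ B - η * φ y := by simp [hf]; linarith [hVb y]
    linarith
  have hTcomp : IsCompact T := hKc.of_isClosed_subset hTclosed hTsub
  have hTne : T.Nonempty := ⟨R, hRS, le_refl c⟩
  have hbdd : BddAbove (f '' T) := by
    obtain ⟨m, hmT, hm⟩ := hTcomp.exists_isMaxOn hTne
      (Continuous.continuousOn (by continuity : Continuous (fun y => B - η * φ y)))
    refine ⟨B - η * φ m, ?_⟩
    rintro _ ⟨y, hy, rfl⟩
    have : f y ≤ B - η * φ y := by simp [hf]; linarith [hVb y]
    exact le_trans this (hm hy)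
  obtain ⟨ybar, hybarT, hybar⟩ := usc_max hfusc hTcomp hTne hbdd
  refine ⟨ybar, hybarT.1, ?_⟩
  intro y hy
  by_cases hyc : c ≤ f y
  · exact hybar y ⟨hy, hyc⟩
  · push_neg at hyc
    exact le_trans (le_of_lt hyc) (hybar R ⟨hRS, le_refl c⟩)

theorem stmt_17 (φ : ℝ → ℝ) (hφc : Continuous φ)
    (hφcoer : Tendsto φ (cocompact ℝ) atTop)
    (V : ℝ → ℝ) (hV : UpperSemicontinuous V) (hVb : ∃ B, ∀ y, V y ≤ B) :
    (∀ η > (0:ℝ), ∀ R > (0:ℝ), ∃ ybar, R ≤ |ybar| ∧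
      ∀ y, R ≤ |y| → V y - η * φ y ≤ V ybar - η * φ ybar) ∧
    (∀ R > (0:ℝ),
      (∀ η > (0:ℝ), ∀ ybar, (R ≤ |ybar| ∧
          ∀ y, R ≤ |y| → V y - η * φ y ≤ V ybar - η * φ ybar) → |ybar| = R) →
      ∃ y₀, |y₀| ≤ R ∧ ∀ y, V y ≤ V y₀) := by
  obtain ⟨B, hVb⟩ := hVb
  have hp1 := part1 φ hφc hφcoer V hV hVb
  refine ⟨hp1, ?_⟩
  intro R hR H
  -- max of V on the ball
  have hball : {y : ℝ | |y| ≤ R} = Icc (-R) R := by ext y; simp [abs_le]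
  have hcomp : IsCompact {y : ℝ | |y| ≤ R} := hball ▸ isCompact_Icc
  have hne : ({y : ℝ | |y| ≤ R}).Nonempty := ⟨0, by simp [le_of_lt hR]⟩
  have hbdd : BddAbove (V '' {y : ℝ | |y| ≤ R}) :=
    ⟨B, by rintro _ ⟨y, _, rfl⟩; exact hVb y⟩
  obtain ⟨y₀, hy₀, hy₀max⟩ := usc_max hV hcomp hne hbdd
  refine ⟨y₀, hy₀, ?_⟩
  intro y
  by_cases hyR : |y| ≤ R
  · exact hy₀max y hyR
  push_neg at hyR
  have hyR' : R ≤ |y| := le_of_lt hyR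
  apply le_of_forall_pos_le_add
  intro ε hε
  set D : ℝ := |φ y| + |φ R| + |φ (-R)| + 1 with hD
  have hDpos : 0 < D := by positivity
  set η := ε / D with hη
  have hηpos : 0 < η := div_pos hε hDpos
  obtain ⟨ybar, hybar1, hybar2⟩ := hp1 η hηpos R hR
  have habs : |ybar| = R := H η hηpos ybar ⟨hybar1, hybar2⟩
  have hVybar : V ybar ≤ V y₀ := hy₀max ybar (le_of_eq habs)
  have hkey : V y - η * φ y ≤ V ybar - η * φ ybar := hybar2 y hyR'
  have hφybar : φ y - φ ybar ≤ D := by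
    rcases abs_eq (le_of_lt hR) |>.1 habs with h | h <;> rw [h] <;>
      [skip; skip] <;>
      cases abs_cases (φ y) with
      | _ => cases abs_cases (φ R) with
        | _ => cases abs_cases (φ (-R)) with
          | _ => simp [hD]; linarith
  have : η * (φ y - φ ybar) ≤ η * D :=
    mul_le_mul_of_nonneg_left hφybar (le_of_lt hηpos)
  have hηD : η * D = ε := by rw [hη, div_mul_cancel₀ ε hDpos.ne']
  nlinarith
end
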